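/- Let n be an integer and c a real constant. Define quaternion-valued functions A_τ(r,Θ,φ) := (n/2)(c − 1/r)·q_n(Θ,φ), A_r := 0, A_Θ(Θ,φ) := (1/2)(sin(nφ)·i − cos(nφ)·j), A_φ(Θ,φ) := (n/2)cos Θ·q_n(Θ,φ) − (n/2)·k, where q_n(Θ,φ) := sin Θ cos(nφ)·i + sin Θ sin(nφ)·j + cos Θ·k. Then for all r ≠ 0 and all Θ, φ, the curvature components F_{μν} = ∂_μ A_ν − ∂_ν A_μ + A_μ A_ν − A_ν A_μ satisfy: F_{τr} = −(n/(2r²))·q_n(Θ,φ); F_{ΘΦ} = −(n/2) sin Θ·q_n(Θ,φ); F_{τΘ} = 0; F_{τφ} = 0; F_{rΘ} = 0; F_{rφ} = 0. (That is, the curvature of the self-dual Charap–Duff connection Ã_n equals n·ω·q_n, where ω = −(1/2)(r^{-2} dτ∧dr + sin Θ dΘ∧dφ).) -/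

import Mathlib

open scoped Quaternion

/-- The imaginary unit `i` of the real quaternions. -/
def qi : ℍ[ℝ] := ⟨0, 1, 0, 0⟩

/-- The imaginary unit `j` of the real quaternions. -/
def qj : ℍ[ℝ] := ⟨0, 0, 1, 0⟩

/-- The imaginary unit `k` of the real quaternions. -/
def qk : ℍ[ℝ] := ⟨0, 0, 0, 1⟩

/-- The Charap–Duff field `q_n(Θ,φ) = sin Θ cos(nφ)·i + sin Θ sin(nφ)·j + cos Θ·k`. -/
noncomputable def charapDuffQ (n : ℤ) (Θ φ : ℝ) : ℍ[ℝ] :=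
  (Real.sin Θ * Real.cos (n * φ)) • qi + (Real.sin Θ * Real.sin (n * φ)) • qj
    + Real.cos Θ • qk

/-- The `dτ`-component `A_τ = (n/2)(c − 1/r)·q_n` of the Charap–Duff connection. -/
noncomputable def Atau (n : ℤ) (c r Θ φ : ℝ) : ℍ[ℝ] :=
  ((n : ℝ) / 2 * (c - 1 / r)) • charapDuffQ n Θ φ

/-- The `dr`-component `A_r = 0` of the Charap–Duff connection. -/
noncomputable def Ar : ℍ[ℝ] := 0

/-- The `dΘ`-component `A_Θ = (1/2)(sin(nφ)·i − cos(nφ)·j)` of the Charap–Duff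
connection. -/
noncomputable def Atheta (n : ℤ) (φ : ℝ) : ℍ[ℝ] :=
  (2⁻¹ * Real.sin (n * φ)) • qi - (2⁻¹ * Real.cos (n * φ)) • qj

/-- The `dφ`-component `A_φ = (n/2)cos Θ·q_n − (n/2)·k` of the Charap–Duff connection. -/
noncomputable def Aphi (n : ℤ) (Θ φ : ℝ) : ℍ[ℝ] :=
  ((n : ℝ) / 2 * Real.cos Θ) • charapDuffQ n Θ φ - ((n : ℝ) / 2) • qk

@[simp] lemma qi_re : qi.re = 0 := rfl
@[simp] lemma qi_imI : qi.imI = 1 := rfl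
@[simp] lemma qi_imJ : qi.imJ = 0 := rfl
@[simp] lemma qi_imK : qi.imK = 0 := rfl
@[simp] lemma qj_re : qj.re = 0 := rfl
@[simp] lemma qj_imI : qj.imI = 0 := rfl
@[simp] lemma qj_imJ : qj.imJ = 1 := rfl
@[simp] lemma qj_imK : qj.imK = 0 := rfl
@[simp] lemma qk_re : qk.re = 0 := rfl
@[simp] lemma qk_imI : qk.imI = 0 := rfl
@[simp] lemma qk_imJ : qk.imJ = 0 := rfl
@[simp] lemma qk_imK : qk.imK = 1 := rfl

lemma hQtheta (n : ℤ) (Θ φ : ℝ) : HasDerivAt (fun t => charapDuffQ n t φ)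
    ((Real.cos Θ * Real.cos (n * φ)) • qi + (Real.cos Θ * Real.sin (n * φ)) • qj
      + (-Real.sin Θ) • qk) Θ := by
  unfold charapDuffQ
  exact ((((Real.hasDerivAt_sin Θ).mul_const _).smul_const qi).add
    (((Real.hasDerivAt_sin Θ).mul_const _).smul_const qj)).add
    ((Real.hasDerivAt_cos Θ).smul_const qk)

lemma hmul (n : ℤ) (φ : ℝ) : HasDerivAt (fun t : ℝ => (n : ℝ) * t) (n : ℝ) φ := by
  simpa using (hasDerivAt_id φ).const_mul (n : ℝ)

lemma hQphi (n : ℤ) (Θ φ : ℝ) : HasDerivAt (fun t => charapDuffQ n Θ t)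
    ((Real.sin Θ * (-Real.sin (n * φ) * n)) • qi
      + (Real.sin Θ * (Real.cos (n * φ) * n)) • qj + (0 : ℝ) • qk) φ := by
  unfold charapDuffQ
  exact ((((Real.hasDerivAt_cos _).comp φ (hmul n φ)).const_mul _).smul_const qi).add
    ((((Real.hasDerivAt_sin _).comp φ (hmul n φ)).const_mul _).smul_const qj) |>.add
    ((hasDerivAt_const φ (Real.cos Θ)).smul_const qk)

lemma hAthetaphi (n : ℤ) (φ : ℝ) : HasDerivAt (fun t : ℝ => Atheta n t)
    ((2⁻¹ * (Real.cos ((n : ℝ) * φ) * n)) • qi - (2⁻¹ * (-Real.sin ((n : ℝ) * φ) * n)) • qj) φ := by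
  unfold Atheta
  exact ((((Real.hasDerivAt_sin _).comp φ (hmul n φ)).const_mul _).smul_const qi).sub
    ((((Real.hasDerivAt_cos _).comp φ (hmul n φ)).const_mul _).smul_const qj)

/-- The curvature `F_{μν} = ∂_μ A_ν − ∂_ν A_μ + A_μ A_ν − A_ν A_μ` of the self-dual
Charap–Duff connection `Ã_n` equals `n·ω·q_n` where
`ω = −(1/2)(r^{-2} dτ∧dr + sin Θ dΘ∧dφ)`:
`F_{τr} = −(n/(2r²))·q_n`, `F_{ΘΦ} = −(n/2) sin Θ·q_n`, and
`F_{τΘ} = F_{τφ} = F_{rΘ} = F_{rφ} = 0`. -/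
theorem charap_duff_curvature (n : ℤ) (c : ℝ) (r : ℝ) (hr : r ≠ 0) (τ Θ φ : ℝ) :
    (deriv (fun _ : ℝ => Ar) τ - deriv (fun s : ℝ => Atau n c s Θ φ) r
        + Atau n c r Θ φ * Ar - Ar * Atau n c r Θ φ
      = (-((n : ℝ) / (2 * r ^ 2))) • charapDuffQ n Θ φ) ∧
    (deriv (fun t : ℝ => Aphi n t φ) Θ - deriv (fun t : ℝ => Atheta n t) φ
        + Atheta n φ * Aphi n Θ φ - Aphi n Θ φ * Atheta n φ
      = (-((n : ℝ) / 2) * Real.sin Θ) • charapDuffQ n Θ φ) ∧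
    (deriv (fun _ : ℝ => Atheta n φ) τ - deriv (fun t : ℝ => Atau n c r t φ) Θ
        + Atau n c r Θ φ * Atheta n φ - Atheta n φ * Atau n c r Θ φ = 0) ∧
    (deriv (fun _ : ℝ => Aphi n Θ φ) τ - deriv (fun t : ℝ => Atau n c r Θ t) φ
        + Atau n c r Θ φ * Aphi n Θ φ - Aphi n Θ φ * Atau n c r Θ φ = 0) ∧
    (deriv (fun _ : ℝ => Atheta n φ) r - deriv (fun _ : ℝ => Ar) Θ
        + Ar * Atheta n φ - Atheta n φ * Ar = 0) ∧
    (deriv (fun _ : ℝ => Aphi n Θ φ) r - deriv (fun _ : ℝ => Ar) φ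
        + Ar * Aphi n Θ φ - Aphi n Θ φ * Ar = 0) := by
  have hs := Real.sin_sq_add_cos_sq Θ
  have hs2 := Real.sin_sq_add_cos_sq ((n : ℝ) * φ)
  refine ⟨?_, ?_, ?_, ?_, ?_, ?_⟩
  · have h1 : HasDerivAt (fun s : ℝ => Atau n c s Θ φ)
        (((n : ℝ) / 2 * - -(r ^ 2)⁻¹) • charapDuffQ n Θ φ) r := by
      simp only [Atau, one_div]
      exact (((hasDerivAt_inv hr).const_sub c).const_mul ((n : ℝ) / 2)).smul_const _
    rw [deriv_const, h1.deriv]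
    ext <;> simp [Ar, charapDuffQ, qi, qj, qk] <;> field_simp <;> ring
  · have hc : HasDerivAt (fun t : ℝ => (n : ℝ) / 2 * Real.cos t)
        ((n : ℝ) / 2 * -Real.sin Θ) Θ := (Real.hasDerivAt_cos Θ).const_mul _
    have hA := (hc.smul (hQtheta n Θ φ)).sub_const (((n : ℝ) / 2) • qk)
    have hA' : HasDerivAt (fun t : ℝ => Aphi n t φ)
        (((n : ℝ) / 2 * Real.cos Θ) •
            ((Real.cos Θ * Real.cos (n * φ)) • qi + (Real.cos Θ * Real.sin (n * φ)) • qj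
              + (-Real.sin Θ) • qk) +
          ((n : ℝ) / 2 * -Real.sin Θ) • charapDuffQ n Θ φ) Θ := by
      simpa only [Aphi, Pi.smul_apply'] using hA
    rw [hA'.deriv, (hAthetaphi n φ).deriv]
    ext <;>
      simp [Aphi, Atheta, charapDuffQ] <;>
      ring_nf <;>
      simp only [Real.sin_sq] <;> ring_nf
  · have h1 : HasDerivAt (fun t : ℝ => Atau n c r t φ)
        (((n : ℝ) / 2 * (c - 1 / r)) •
          ((Real.cos Θ * Real.cos (n * φ)) • qi + (Real.cos Θ * Real.sin (n * φ)) • qj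
            + (-Real.sin Θ) • qk)) Θ := by
      simpa only [Atau, Pi.smul_def] using (hQtheta n Θ φ).const_smul ((n : ℝ) / 2 * (c - 1 / r))
    rw [deriv_const, h1.deriv]
    ext <;>
      simp [Atau, Atheta, charapDuffQ] <;>
      ring_nf <;>
      simp only [Real.sin_sq] <;> ring_nf
  · have h1 : HasDerivAt (fun t : ℝ => Atau n c r Θ t)
        (((n : ℝ) / 2 * (c - 1 / r)) •
          ((Real.sin Θ * (-Real.sin (n * φ) * n)) • qi
            + (Real.sin Θ * (Real.cos (n * φ) * n)) • qj + (0 : ℝ) • qk)) φ := by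
      simpa only [Atau, Pi.smul_def] using (hQphi n Θ φ).const_smul ((n : ℝ) / 2 * (c - 1 / r))
    rw [deriv_const, h1.deriv]
    ext <;>
      simp [Atau, Aphi, charapDuffQ] <;>
      ring_nf <;>
      simp only [Real.sin_sq] <;> ring_nf
  · simp [Ar, deriv_const]
  · simp [Ar, deriv_const]
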